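/- If a linear functional f ≠ 0 is a facet of a compact convex set K at k ∈ K with direction d (so f(d) = 1), then any other facet g of K at k is a positive scalar multiple of f: g = g(d)·f. -/

import Mathlib

theorem facet_unique_up_to_scalar
    {n : ℕ} (K : Set (EuclideanSpace ℝ (Fin n)))
    (hKne : K.Nonempty) (hKc : IsCompact K) (hKconv : Convex ℝ K)
    (k : EuclideanSpace ℝ (Fin n)) (hk : k ∈ K)
    (f : EuclideanSpace ℝ (Fin n) →ₗ[ℝ] ℝ) (hf : f ≠ 0)
    (d : EuclideanSpace ℝ (Fin n)) (hfd : f d = 1)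
    (hfacet : ∃ U ∈ nhds k, ∀ x ∈ U,
      x - f (x - k) • d ∈ {y ∈ K | ∀ y' ∈ K, f y' ≤ f y})
    (g : EuclideanSpace ℝ (Fin n) →ₗ[ℝ] ℝ) (hg : g ≠ 0)
    (d' : EuclideanSpace ℝ (Fin n))
    (hgfacet : ∃ U ∈ nhds k, ∀ x ∈ U,
      x - g (x - k) • d' ∈ {y ∈ K | ∀ y' ∈ K, g y' ≤ g y}) :
    ∀ y, g y = g d * f y := by
  obtain ⟨U, hU, hUmax⟩ := hfacet
  obtain ⟨V, hV, hVmax⟩ := hgfacet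
  have hkV : k ∈ V := mem_of_mem_nhds hV
  have hkmax : ∀ y' ∈ K, g y' ≤ g k := by
    have h := hVmax k hkV
    simpa using h.2
  have hker : ∀ w, f w = 0 → g w = 0 := by
    intro w hw
    rcases eq_or_ne w 0 with rfl | hw0
    · simp
    obtain ⟨ε, hε, hball⟩ := Metric.mem_nhds_iff.mp hU
    have hwpos : 0 < ‖w‖ := norm_pos_iff.mpr hw0
    have hmem : ∀ t : ℝ, |t| * ‖w‖ < ε → k + t • w ∈ K := by
      intro t ht
      have hx : k + t • w ∈ U := by
        apply hball
        rw [Metric.mem_ball, dist_eq_norm]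
        simpa [norm_smul] using ht
      have h := hUmax _ hx
      have h0 : f (k + t • w - k) = 0 := by
        have : k + t • w - k = t • w := by abel
        rw [this, map_smul, hw, smul_eq_mul, mul_zero]
      rw [h0, zero_smul, sub_zero] at h
      exact h.1
    set t := ε / (2 * ‖w‖) with htdef
    have htpos : 0 < t := by positivity
    have htw : t * ‖w‖ = ε / 2 := by
      field_simp [htdef]
      rw [htdef, div_mul_eq_mul_div, div_mul_eq_mul_div, div_eq_iff (by positivity)]; ring
    have hlt : |t| * ‖w‖ < ε := by
      rw [abs_of_pos htpos, htw]; linarith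
    have hlt' : |(-t)| * ‖w‖ < ε := by
      rw [abs_neg, abs_of_pos htpos, htw]; linarith
    have h1 := hkmax _ (hmem t hlt)
    have h2 := hkmax _ (hmem (-t) hlt')
    rw [map_add, map_smul, smul_eq_mul] at h1 h2
    have e1 : t * g w ≤ 0 := by linarith
    have e2 : (-t) * g w ≤ 0 := by linarith
    nlinarith
  intro y
  have h0 : f (y - f y • d) = 0 := by
    rw [map_sub, map_smul, hfd, smul_eq_mul, mul_one, sub_self]
  have := hker _ h0
  rw [map_sub, map_smul, smul_eq_mul, sub_eq_zero] at this
  rw [this]; ring
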